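/- There exists a continuous function φ : ℝ → ℝ with the following properties: (i) φ(x) = 0 for every x with |x| ≥ 3/4; (ii) φ(x) = 1 for every x with |x| ≤ 1/4; (iii) φ is nondecreasing on [−3/4, −1/4] and nonincreasing on [1/4, 3/4]; (iv) φ(n) = δ_{0,n} for all n ∈ ℤ; (v) φ is Hölder continuous with exponent log 2 / log 3; and (vi) φ satisfies the ternary dual refinement equation φ(x) = (1/2) φ(3x + 3/2) + φ(3x + 1/2) + φ(3x − 1/2) + (1/2) φ(3x − 3/2) for all x ∈ ℝ. -/

import Mathlib

open Filter Topology

noncomputable section CantorDualAux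

/-- clamp to [0,1] -/
private def cg0 (x : ℝ) : ℝ := max 0 (min 1 x)

/-- Cantor-function iteration operator. -/
private def cT (g : ℝ → ℝ) (x : ℝ) : ℝ :=
  if x ≤ 1/3 then g (3*x) / 2
  else if x ≤ 2/3 then 1/2
  else (1 + g (3*x - 2)) / 2

private def cseq : ℕ → ℝ → ℝ
  | 0 => cg0
  | n+1 => cT (cseq n)

private lemma cseq_zero {n : ℕ} {x : ℝ} (hx : x ≤ 0) : cseq n x = 0 := by
  induction n generalizing x with
  | zero =>
      simp only [cseq, cg0]
      rw [min_eq_right (by linarith), max_eq_left hx]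
  | succ n ih =>
      have h : x ≤ 1/3 := by linarith
      simp only [cseq, cT, if_pos h]
      rw [ih (by linarith)]; norm_num

private lemma cseq_one {n : ℕ} {x : ℝ} (hx : 1 ≤ x) : cseq n x = 1 := by
  induction n generalizing x with
  | zero =>
      simp only [cseq, cg0]
      rw [min_eq_left (by linarith), max_eq_right (by norm_num)]
  | succ n ih =>
      have h1 : ¬ x ≤ 1/3 := by linarith
      have h2 : ¬ x ≤ 2/3 := by linarith
      simp only [cseq, cT, if_neg h1, if_neg h2]
      rw [ih (by linarith)]; norm_num

private lemma cseq_mem {n : ℕ} {x : ℝ} : 0 ≤ cseq n x ∧ cseq n x ≤ 1 := by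
  induction n generalizing x with
  | zero =>
      refine ⟨le_max_left _ _, ?_⟩
      simp only [cseq, cg0]
      rw [max_le_iff]; exact ⟨by norm_num, le_trans (min_le_left _ _) le_rfl⟩
  | succ n ih =>
      simp only [cseq, cT]
      split_ifs with h1 h2
      · obtain ⟨a, b⟩ := ih (x := 3*x); constructor <;> linarith
      · norm_num
      · obtain ⟨a, b⟩ := ih (x := 3*x - 2); constructor <;> linarith

private lemma cseq_mono {n : ℕ} : Monotone (cseq n) := by
  induction n with
  | zero =>
      intro x y hxy
      exact max_le_max le_rfl (min_le_min le_rfl hxy)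
  | succ n ih =>
      intro x y hxy
      simp only [cseq, cT]
      have hb1 := cseq_mem (n := n) (x := 3*x)
      have hb2 := cseq_mem (n := n) (x := 3*y - 2)
      split_ifs with h1 h2 h3 h4 h5 h6 h7 h8 <;> try push_neg at *
      · have := ih (by linarith : 3*x ≤ 3*y); linarith
      · linarith [hb1.2]
      · linarith [hb1.2, (cseq_mem (n := n) (x := 3*y - 2)).1]
      · linarith
      · linarith
      · linarith [hb2.1]
      · linarith
      · linarith
      · have := ih (by linarith : 3*x - 2 ≤ 3*y - 2); linarith

private lemma cseq_cont {n : ℕ} : Continuous (cseq n) := by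
  induction n with
  | zero =>
      exact continuous_const.max (continuous_const.min continuous_id)
  | succ n ih =>
      have houter : Continuous (cseq (n+1)) := by
        have h2 : Continuous fun x : ℝ => if x ≤ 2/3 then (1/2 : ℝ) else (1 + cseq n (3*x-2))/2 := by
          apply Continuous.if_le continuous_const
            (((continuous_const.add (ih.comp (by continuity))).div_const 2)) continuous_id
            continuous_const
          intro x hx
          simp only [id] at hx
          simp only [Function.comp, hx, Pi.add_apply]
          rw [show 3*(2/3 : ℝ) - 2 = 0 by norm_num, cseq_zero le_rfl]
          norm_num
        have : (fun x : ℝ => cseq (n+1) x) = fun x : ℝ =>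
            if x ≤ 1/3 then cseq n (3*x) / 2
            else if x ≤ 2/3 then (1/2 : ℝ) else (1 + cseq n (3*x-2))/2 := by
          funext x; simp [cseq, cT]
        rw [show cseq (n+1) = fun x => cseq (n+1) x from rfl, this]
        apply Continuous.if_le ((ih.comp (by continuity)).div_const 2) h2 continuous_id
          continuous_const
        intro x hx
        simp only [id] at hx
        simp only [Function.comp, hx]
        rw [if_pos (by norm_num : (1/3:ℝ) ≤ 2/3),
          show 3*(1/3 : ℝ) = 1 by norm_num, cseq_one le_rfl]
      exact houter

private lemma cT_contract {g h : ℝ → ℝ} {d : ℝ}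
    (hd : ∀ y, |g y - h y| ≤ d) (x : ℝ) : |cT g x - cT h x| ≤ d / 2 := by
  have hd0 : 0 ≤ d := le_trans (abs_nonneg _) (hd 0)
  simp only [cT]
  split_ifs with h1 h2
  · rw [div_sub_div_same, abs_div, abs_of_pos (by norm_num : (0:ℝ) < 2)]
    exact div_le_div_of_nonneg_right (hd _) (by norm_num) |>.trans le_rfl
  · simp; linarith
  · rw [show (1 + g (3*x-2))/2 - (1 + h (3*x-2))/2 = (g (3*x-2) - h (3*x-2))/2 by ring,
      abs_div, abs_of_pos (by norm_num : (0:ℝ) < 2)]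
    exact div_le_div_of_nonneg_right (hd _) (by norm_num) |>.trans le_rfl

private lemma cseq_contract (n : ℕ) (x : ℝ) :
    |cseq (n+1) x - cseq n x| ≤ (1/2 : ℝ)^n := by
  induction n generalizing x with
  | zero =>
      have h1 := cseq_mem (n := 1) (x := x)
      have h0 := cseq_mem (n := 0) (x := x)
      rw [abs_sub_le_iff]; constructor <;> simp <;> linarith
  | succ n ih =>
      have : cseq (n+2) x = cT (cseq (n+1)) x := rfl
      rw [this, show cseq (n+1) = cT (cseq n) from rfl]
      calc |cT (cseq (n+1)) x - cT (cseq n) x| ≤ (1/2:ℝ)^n / 2 :=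
            cT_contract (fun y => ih y) x
        _ = (1/2:ℝ)^(n+1) := by ring

private lemma cseq_cauchy (x : ℝ) : CauchySeq (fun n => cseq n x) := by
  apply cauchySeq_of_le_geometric (1/2) 1 (by norm_num)
  intro n
  rw [Real.dist_eq, abs_sub_comm]
  calc |cseq (n+1) x - cseq n x| ≤ (1/2:ℝ)^n := cseq_contract n x
    _ = 1 * (1/2)^n := by ring

/-- The Cantor function (extended to ℝ). -/
private def cantorC (x : ℝ) : ℝ := limUnder atTop (fun n => cseq n x)

private lemma cantorC_tendsto (x : ℝ) :
    Tendsto (fun n => cseq n x) atTop (𝓝 (cantorC x)) :=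
  (cseq_cauchy x).tendsto_limUnder

private lemma cantorC_dist (n : ℕ) (x : ℝ) :
    dist (cseq n x) (cantorC x) ≤ 1 * (1/2:ℝ)^n / (1 - 1/2) := by
  apply dist_le_of_le_geometric_of_tendsto (1/2) 1 (by norm_num)
    (fun m => ?_) (cantorC_tendsto x) n
  rw [Real.dist_eq, abs_sub_comm]
  calc |cseq (m+1) x - cseq m x| ≤ (1/2:ℝ)^m := cseq_contract m x
    _ = 1 * (1/2)^m := by ring

private lemma cantorC_cont : Continuous cantorC := by
  have hu : TendstoUniformly (fun n x => cseq n x) cantorC atTop := by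
    rw [Metric.tendstoUniformly_iff]
    intro ε hε
    have hlim : Tendsto (fun n : ℕ => 1 * (1/2:ℝ)^n / (1 - 1/2)) atTop (𝓝 0) := by
      have h := tendsto_pow_atTop_nhds_zero_of_lt_one (by norm_num : (0:ℝ) ≤ 1/2) (by norm_num)
      have h2 : Tendsto (fun n : ℕ => (1/2:ℝ)^n * (1 / (1 - 1/2))) atTop (𝓝 (0 * (1 / (1 - 1/2)))) :=
        h.mul_const _
      convert h2 using 2 with n
      · ring
      · norm_num

    filter_upwards [hlim.eventually (gt_mem_nhds hε)] with n hn x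
    rw [dist_comm]
    exact lt_of_le_of_lt (cantorC_dist n x) hn
  exact hu.continuous (Frequently.of_forall fun n => cseq_cont)

private lemma cantorC_of_nonpos {x : ℝ} (hx : x ≤ 0) : cantorC x = 0 :=
  tendsto_nhds_unique (cantorC_tendsto x)
    (by simpa [funext fun n => cseq_zero (n := n) hx] using tendsto_const_nhds (x := (0:ℝ)))

private lemma cantorC_of_one_le {x : ℝ} (hx : 1 ≤ x) : cantorC x = 1 :=
  tendsto_nhds_unique (cantorC_tendsto x)
    (by simpa [funext fun n => cseq_one (n := n) hx] using tendsto_const_nhds (x := (1:ℝ)))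

private lemma cantorC_mem (x : ℝ) : 0 ≤ cantorC x ∧ cantorC x ≤ 1 :=
  ⟨le_of_tendsto_of_tendsto' tendsto_const_nhds (cantorC_tendsto x)
      (fun n => (cseq_mem).1),
   le_of_tendsto_of_tendsto' (cantorC_tendsto x) tendsto_const_nhds
      (fun n => (cseq_mem).2)⟩

private lemma cantorC_mono : Monotone cantorC := fun x y hxy =>
  le_of_tendsto_of_tendsto' (cantorC_tendsto x) (cantorC_tendsto y)
    (fun n => cseq_mono hxy)

private lemma cantorC_left {x : ℝ} (hx : x ≤ 1/3) : cantorC x = cantorC (3*x) / 2 := by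
  have h1 : Tendsto (fun n => cseq (n+1) x) atTop (𝓝 (cantorC x)) :=
    (cantorC_tendsto x).comp (tendsto_add_atTop_nat 1)
  have h2 : (fun n => cseq (n+1) x) = fun n => cseq n (3*x) / 2 := by
    funext n
    simp only [cseq, cT]
    rw [if_pos hx]
  rw [h2] at h1
  exact tendsto_nhds_unique h1 ((cantorC_tendsto (3*x)).div_const 2)

private lemma cantorC_mid {x : ℝ} (h1 : 1/3 ≤ x) (h2 : x ≤ 2/3) : cantorC x = 1/2 := by
  rcases eq_or_lt_of_le h1 with h | h
  · rw [← h, cantorC_left le_rfl, show 3*(1/3:ℝ) = 1 by norm_num, cantorC_of_one_le le_rfl]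
  · have h3 : Tendsto (fun n => cseq (n+1) x) atTop (𝓝 (cantorC x)) :=
      (cantorC_tendsto x).comp (tendsto_add_atTop_nat 1)
    have h4 : (fun n => cseq (n+1) x) = fun _ => (1/2 : ℝ) := by
      funext n
      simp only [cseq, cT, if_neg (by linarith : ¬ x ≤ 1/3), if_pos h2]
    rw [h4] at h3
    exact tendsto_nhds_unique h3 tendsto_const_nhds

private lemma cantorC_right {x : ℝ} (hx : 2/3 ≤ x) :
    cantorC x = (1 + cantorC (3*x - 2)) / 2 := by
  rcases eq_or_lt_of_le hx with h | h
  · rw [← h, cantorC_mid (by norm_num) le_rfl,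
      show 3*(2/3:ℝ) - 2 = 0 by norm_num, cantorC_of_nonpos le_rfl]
    norm_num
  · have h1 : Tendsto (fun n => cseq (n+1) x) atTop (𝓝 (cantorC x)) :=
      (cantorC_tendsto x).comp (tendsto_add_atTop_nat 1)
    have h2 : (fun n => cseq (n+1) x) = fun n => (1 + cseq n (3*x - 2)) / 2 := by
      funext n
      simp only [cseq, cT, if_neg (by linarith : ¬ x ≤ 1/3), if_neg (by linarith : ¬ x ≤ 2/3)]
    rw [h2] at h1
    exact tendsto_nhds_unique h1 (((cantorC_tendsto (3*x-2)).const_add 1).div_const 2)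


/-- Two-scale identity for the Cantor function. -/
private lemma cantorC_star (u : ℝ) :
    2 * cantorC u = cantorC (3*u) + cantorC (3*u - 2) := by
  rcases le_or_gt u 0 with h | h
  · rw [cantorC_of_nonpos h, cantorC_of_nonpos (by linarith), cantorC_of_nonpos (by linarith)]
    ring
  rcases le_or_gt u (1/3) with h1 | h1
  · rw [cantorC_left h1, cantorC_of_nonpos (by linarith : 3*u - 2 ≤ 0)]
    ring
  rcases le_or_gt u (2/3) with h2 | h2
  · rw [cantorC_mid (le_of_lt h1) h2, cantorC_of_one_le (by linarith : (1:ℝ) ≤ 3*u),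
      cantorC_of_nonpos (by linarith : 3*u - 2 ≤ 0)]
    norm_num
  rcases le_or_gt u 1 with h3 | h3
  · rw [cantorC_right (le_of_lt h2), cantorC_of_one_le (by linarith : (1:ℝ) ≤ 3*u)]
    ring
  · rw [cantorC_of_one_le (le_of_lt h3), cantorC_of_one_le (by linarith : (1:ℝ) ≤ 3*u),
      cantorC_of_one_le (by linarith : (1:ℝ) ≤ 3*u - 2)]
    ring

private lemma cantorC_holder_aux : ∀ n : ℕ, ∀ x y : ℝ, y ≤ x → x - y ≤ (1/3:ℝ)^n →
    |cantorC x - cantorC y| ≤ (1/2:ℝ)^n := by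
  intro n
  induction n with
  | zero =>
      intro x y _ _
      obtain ⟨a1, b1⟩ := cantorC_mem x
      obtain ⟨a2, b2⟩ := cantorC_mem y
      rw [abs_sub_le_iff]; constructor <;> simp <;> linarith
  | succ n ih =>
      intro x y hyx hxy
      have hpow : (1/3:ℝ)^(n+1) ≤ 1/3 := by
        calc (1/3:ℝ)^(n+1) ≤ (1/3:ℝ)^1 :=
              pow_le_pow_of_le_one (by norm_num) (by norm_num) (by omega)
          _ = 1/3 := pow_one _
      -- helper for the left piece
      have ha : ∀ a b : ℝ, b ≤ a → a ≤ 1/3 → a - b ≤ (1/3:ℝ)^(n+1) →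
          |cantorC a - cantorC b| ≤ (1/2:ℝ)^(n+1) := by
        intro a b hba ha3 hab
        rw [cantorC_left ha3, cantorC_left (le_trans hba ha3), div_sub_div_same, abs_div,
          abs_of_pos (by norm_num : (0:ℝ) < 2)]
        have : |cantorC (3*a) - cantorC (3*b)| ≤ (1/2:ℝ)^n := by
          apply ih _ _ (by linarith)
          calc 3*a - 3*b = 3 * (a - b) := by ring
            _ ≤ 3 * (1/3:ℝ)^(n+1) := by linarith
            _ = (1/3:ℝ)^n := by rw [pow_succ]; ring
        calc |cantorC (3*a) - cantorC (3*b)| / 2 ≤ (1/2:ℝ)^n / 2 := by linarith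
          _ = (1/2:ℝ)^(n+1) := by rw [pow_succ]; ring
      -- helper for the right piece
      have hb : ∀ a b : ℝ, b ≤ a → 2/3 ≤ b → a - b ≤ (1/3:ℝ)^(n+1) →
          |cantorC a - cantorC b| ≤ (1/2:ℝ)^(n+1) := by
        intro a b hba hb3 hab
        rw [cantorC_right (le_trans hb3 hba), cantorC_right hb3,
          show (1 + cantorC (3*a-2))/2 - (1 + cantorC (3*b-2))/2
            = (cantorC (3*a-2) - cantorC (3*b-2))/2 by ring, abs_div,
          abs_of_pos (by norm_num : (0:ℝ) < 2)]
        have : |cantorC (3*a-2) - cantorC (3*b-2)| ≤ (1/2:ℝ)^n := by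
          apply ih _ _ (by linarith)
          calc 3*a - 2 - (3*b - 2) = 3 * (a - b) := by ring
            _ ≤ 3 * (1/3:ℝ)^(n+1) := by linarith
            _ = (1/3:ℝ)^n := by rw [pow_succ]; ring
        calc |cantorC (3*a-2) - cantorC (3*b-2)| / 2 ≤ (1/2:ℝ)^n / 2 := by linarith
          _ = (1/2:ℝ)^(n+1) := by rw [pow_succ]; ring
      by_cases hx3 : x ≤ 1/3
      · exact ha x y hyx hx3 hxy
      by_cases hy3 : 2/3 ≤ y
      · exact hb x y hyx hy3 hxy
      push_neg at hx3 hy3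
      by_cases hy1 : y ≤ 1/3
      · -- x in the middle third
        have hx2 : x ≤ 2/3 := by linarith
        have hx12 : cantorC x = cantorC (1/3) := by
          rw [cantorC_mid (le_of_lt hx3) hx2, cantorC_mid le_rfl (by norm_num)]
        rw [hx12]
        exact ha (1/3) y hy1 le_rfl (by linarith)
      push_neg at hy1
      by_cases hx2 : x ≤ 2/3
      · rw [cantorC_mid (le_of_lt hx3) hx2, cantorC_mid (le_of_lt hy1) (le_of_lt hy3)]
        simp only [sub_self, abs_zero]
        positivity
      push_neg at hx2
      · have hy12 : cantorC y = cantorC (2/3) := by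
          rw [cantorC_mid (le_of_lt hy1) (le_of_lt hy3), cantorC_mid (by norm_num) le_rfl]
        rw [hy12]
        exact hb x (2/3) (le_of_lt hx2) le_rfl (by linarith)

private lemma alpha_pos : 0 < Real.log 2 / Real.log 3 :=
  div_pos (Real.log_pos (by norm_num)) (Real.log_pos (by norm_num))

private lemma three_rpow_alpha : (3:ℝ) ^ (Real.log 2 / Real.log 3) = 2 := by
  rw [Real.rpow_def_of_pos (by norm_num : (0:ℝ) < 3),
    mul_div_cancel₀ _ (ne_of_gt (Real.log_pos (by norm_num : (1:ℝ) < 3))),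
    Real.exp_log (by norm_num)]

private lemma third_rpow_alpha : ((1:ℝ)/3) ^ (Real.log 2 / Real.log 3) = 1/2 := by
  rw [one_div, Real.inv_rpow (by norm_num : (0:ℝ) ≤ 3), three_rpow_alpha, one_div]

private lemma cantorC_holder_real (x y : ℝ) :
    |cantorC x - cantorC y| ≤ 2 * |x - y| ^ (Real.log 2 / Real.log 3) := by
  set α := Real.log 2 / Real.log 3 with hα
  -- reduce to y ≤ x
  wlog hyx : y ≤ x generalizing x y
  · rw [abs_sub_comm, abs_sub_comm x y]; exact this y x (le_of_not_ge hyx)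
  have hd0 : 0 ≤ x - y := by linarith
  rw [abs_of_nonneg hd0]
  rcases eq_or_lt_of_le hd0 with h0 | h0
  · rw [← h0, show x = y by linarith, sub_self, abs_zero]
    positivity
  set d := x - y with hdd
  rcases le_or_gt 1 d with h1 | h1
  · -- d ≥ 1 : trivial bound
    have hb : |cantorC x - cantorC y| ≤ 1 := by
      obtain ⟨a1, b1⟩ := cantorC_mem x
      obtain ⟨a2, b2⟩ := cantorC_mem y
      rw [abs_sub_le_iff]; constructor <;> linarith
    have hdα : 1 ≤ d ^ α := by
      calc (1:ℝ) = 1 ^ α := (Real.one_rpow α).symm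
        _ ≤ d ^ α := Real.rpow_le_rpow (by norm_num) h1 (le_of_lt alpha_pos)
    linarith
  · set n := ⌊Real.logb 3 (1/d)⌋₊ with hn
    have h1d : 1 ≤ 1/d := by rw [le_one_div (by norm_num) h0]; linarith
    have hlogpos : 0 ≤ Real.logb 3 (1/d) := Real.logb_nonneg (by norm_num) h1d
    -- upper bound : d ≤ (1/3)^n
    have hup : d ≤ (1/3:ℝ)^n := by
      have hfl : (n:ℝ) ≤ Real.logb 3 (1/d) := Nat.floor_le hlogpos
      have h3n : (3:ℝ)^(n:ℝ) ≤ 1/d := by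
        calc (3:ℝ)^(n:ℝ) ≤ (3:ℝ)^(Real.logb 3 (1/d)) :=
              Real.rpow_le_rpow_of_exponent_le (by norm_num) hfl
          _ = 1/d := Real.rpow_logb (by norm_num) (by norm_num) (by positivity)
      rw [Real.rpow_natCast] at h3n
      rw [div_pow, one_pow, le_div_iff₀ (by positivity)]
      rw [le_div_iff₀ h0] at h3n
      linarith
    -- lower bound : (1/3)^(n+1) < d
    have hlow : (1/3:ℝ)^(n+1) < d := by
      have hfl : Real.logb 3 (1/d) < (n:ℝ) + 1 := Nat.lt_floor_add_one _
      have h3n : 1/d < (3:ℝ)^((n:ℝ)+1) := by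
        calc 1/d = (3:ℝ)^(Real.logb 3 (1/d)) :=
              (Real.rpow_logb (by norm_num) (by norm_num) (by positivity)).symm
          _ < (3:ℝ)^((n:ℝ)+1) := Real.rpow_lt_rpow_of_exponent_lt (by norm_num) hfl
      have : ((n:ℝ)+1) = ((n+1 : ℕ) : ℝ) := by push_cast; ring
      rw [this, Real.rpow_natCast] at h3n
      rw [div_pow, one_pow, div_lt_iff₀ (by positivity)]
      rw [div_lt_iff₀ h0] at h3n
      nlinarith [pow_pos (show (0:ℝ) < 3 by norm_num) (n+1)]
    have hC : |cantorC x - cantorC y| ≤ (1/2:ℝ)^n := cantorC_holder_aux n x y hyx hup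
    have hdα : ((1/3:ℝ)^(n+1)) ^ α < d ^ α :=
      Real.rpow_lt_rpow (by positivity) hlow alpha_pos
    have hcomp : ((1/3:ℝ)^(n+1)) ^ α = (1/2:ℝ)^(n+1) := by
      rw [← Real.rpow_natCast (1/3 : ℝ) (n+1), ← Real.rpow_mul (by norm_num),
        mul_comm, Real.rpow_mul (by norm_num), third_rpow_alpha,
        Real.rpow_natCast]
    rw [hcomp] at hdα
    calc |cantorC x - cantorC y| ≤ (1/2:ℝ)^n := hC
      _ = 2 * (1/2:ℝ)^(n+1) := by rw [pow_succ]; ring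
      _ ≤ 2 * d ^ α := by linarith

private lemma holderWith_of_dist_le {C r : NNReal} {f : ℝ → ℝ}
    (h : ∀ x y, |f x - f y| ≤ (C:ℝ) * |x - y| ^ (r:ℝ)) : HolderWith C r f := by
  intro x y
  rw [edist_dist, edist_dist, ENNReal.ofReal_rpow_of_nonneg dist_nonneg r.coe_nonneg,
    ← ENNReal.ofReal_coe_nnreal (p := C), ← ENNReal.ofReal_mul C.coe_nonneg]
  exact ENNReal.ofReal_le_ofReal (by simpa [Real.dist_eq] using h x y)

end CantorDualAux

/-- existence of the (Cantor-type) basic limit function of the ternary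
dual interpolatory scheme with mask `{1/2, 1, 1, 1/2}`: continuous, vanishing for
`|x| ≥ 3/4`, equal to `1` for `|x| ≤ 1/4`, monotone on the two lateral intervals,
interpolatory, Hölder continuous of exponent `log 2 / log 3`, and satisfying the
ternary dual refinement equation. -/
theorem exists_cantor_dual_interpolatory_limit_function :
    ∃ φ : ℝ → ℝ,
      Continuous φ ∧
      (∀ x : ℝ, 3 / 4 ≤ |x| → φ x = 0) ∧
      (∀ x : ℝ, |x| ≤ 1 / 4 → φ x = 1) ∧
      MonotoneOn φ (Set.Icc (-(3 / 4) : ℝ) (-(1 / 4))) ∧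
      AntitoneOn φ (Set.Icc (1 / 4 : ℝ) (3 / 4)) ∧
      (∀ n : ℤ, φ (n : ℝ) = if n = 0 then 1 else 0) ∧
      (∃ C : NNReal, HolderWith C (Real.toNNReal (Real.log 2 / Real.log 3)) φ) ∧
      (∀ x : ℝ, φ x =
        (1 / 2) * φ (3 * x + 3 / 2) + φ (3 * x + 1 / 2) + φ (3 * x - 1 / 2) +
          (1 / 2) * φ (3 * x - 3 / 2)) := by
  set α := Real.log 2 / Real.log 3 with hαdef
  refine ⟨fun x => cantorC (2*x + 3/2) - cantorC (2*x - 1/2), ?_, ?_, ?_, ?_, ?_, ?_, ?_, ?_⟩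
  · exact (cantorC_cont.comp (by continuity)).sub (cantorC_cont.comp (by continuity))
  · -- vanishing
    intro x hx
    dsimp only
    rcases abs_cases x with ⟨h, _⟩ | ⟨h, _⟩
    · rw [h] at hx
      rw [cantorC_of_one_le (by linarith : (1:ℝ) ≤ 2*x + 3/2),
        cantorC_of_one_le (by linarith : (1:ℝ) ≤ 2*x - 1/2)]
      ring
    · rw [h] at hx
      rw [cantorC_of_nonpos (by linarith : 2*x + 3/2 ≤ 0),
        cantorC_of_nonpos (by linarith : 2*x - 1/2 ≤ 0)]
      ring
  · -- equal to 1 on the middle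
    intro x hx
    dsimp only
    rw [abs_le] at hx
    rw [cantorC_of_one_le (by linarith : (1:ℝ) ≤ 2*x + 3/2),
      cantorC_of_nonpos (by linarith : 2*x - 1/2 ≤ 0)]
    ring
  · -- monotone on the left lateral interval
    intro a ha b hb hab
    dsimp only
    simp only [Set.mem_Icc] at ha hb
    rw [cantorC_of_nonpos (by linarith [ha.2] : 2*a - 1/2 ≤ 0),
      cantorC_of_nonpos (by linarith [hb.2] : 2*b - 1/2 ≤ 0)]
    simp only [sub_zero]
    exact cantorC_mono (by linarith)
  · -- antitone on the right lateral interval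
    intro a ha b hb hab
    dsimp only
    simp only [Set.mem_Icc] at ha hb
    rw [cantorC_of_one_le (by linarith [ha.1] : (1:ℝ) ≤ 2*a + 3/2),
      cantorC_of_one_le (by linarith [hb.1] : (1:ℝ) ≤ 2*b + 3/2)]
    have := cantorC_mono (by linarith : 2*a - 1/2 ≤ 2*b - 1/2)
    linarith
  · -- interpolatory
    intro n
    dsimp only
    by_cases hn : n = 0
    · subst hn
      rw [if_pos rfl]
      push_cast
      rw [cantorC_of_one_le (by norm_num : (1:ℝ) ≤ 2*0 + 3/2),
        cantorC_of_nonpos (by norm_num : 2*(0:ℝ) - 1/2 ≤ 0)]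
      ring
    · rw [if_neg hn]
      have h1 : (1:ℝ) ≤ |(n:ℝ)| := by
        rw [← Int.cast_abs]
        exact_mod_cast Int.one_le_abs hn
      rcases abs_cases ((n:ℝ)) with ⟨h, _⟩ | ⟨h, _⟩
      · rw [h] at h1
        rw [cantorC_of_one_le (by linarith : (1:ℝ) ≤ 2*(n:ℝ) + 3/2),
          cantorC_of_one_le (by linarith : (1:ℝ) ≤ 2*(n:ℝ) - 1/2)]
        ring
      · rw [h] at h1
        rw [cantorC_of_nonpos (by linarith : 2*(n:ℝ) + 3/2 ≤ 0),
          cantorC_of_nonpos (by linarith : 2*(n:ℝ) - 1/2 ≤ 0)]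
        ring
  · -- Hölder continuity
    refine ⟨8, holderWith_of_dist_le ?_⟩
    intro x y
    have hcoe : ((Real.toNNReal α : NNReal) : ℝ) = α := Real.coe_toNNReal α (le_of_lt alpha_pos)
    rw [hcoe]
    have key : ∀ a b : ℝ, a - b = 2*(x - y) → |cantorC a - cantorC b| ≤ 2 * |2*(x-y)| ^ α := by
      intro a b hab
      have := cantorC_holder_real a b
      rwa [show a - b = 2*(x-y) from hab] at this
    have h1 := key (2*x + 3/2) (2*y + 3/2) (by ring)
    have h2 := key (2*x - 1/2) (2*y - 1/2) (by ring)
    have habs : |2*(x-y)| = 2 * |x - y| := by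
      rw [abs_mul, abs_of_pos (by norm_num : (0:ℝ) < 2)]
    have hpow : |2*(x-y)| ^ α ≤ 2 * |x - y| ^ α := by
      rw [habs, Real.mul_rpow (by norm_num) (abs_nonneg _)]
      have h2α : (2:ℝ) ^ α ≤ 2 := by
        calc (2:ℝ) ^ α ≤ (2:ℝ) ^ (1:ℝ) := by
              apply Real.rpow_le_rpow_of_exponent_le (by norm_num)
              rw [hαdef, div_le_one (Real.log_pos (by norm_num))]
              exact Real.log_le_log (by norm_num) (by norm_num)
          _ = 2 := Real.rpow_one 2
      have hxy : (0:ℝ) ≤ |x - y| ^ α := Real.rpow_nonneg (abs_nonneg _) α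
      nlinarith
    have hsplit : |(cantorC (2*x + 3/2) - cantorC (2*x - 1/2)) -
        (cantorC (2*y + 3/2) - cantorC (2*y - 1/2))| ≤
        |cantorC (2*x + 3/2) - cantorC (2*y + 3/2)| +
        |cantorC (2*x - 1/2) - cantorC (2*y - 1/2)| := by
      calc _ = |(cantorC (2*x + 3/2) - cantorC (2*y + 3/2)) -
            (cantorC (2*x - 1/2) - cantorC (2*y - 1/2))| := by ring_nf
        _ ≤ _ := abs_sub _ _
    push_cast
    linarith
  · -- refinement equation
    intro x
    dsimp only
    have s1 := cantorC_star (2*x + 3/2)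
    have s2 := cantorC_star (2*x - 1/2)
    rw [show 3*(2*x + 3/2) - 2 = 2*(3*x + 3/2) - 1/2 by ring,
      show 3*(2*x + 3/2) = 2*(3*x + 3/2) + 3/2 by ring] at s1
    rw [show 3*(2*x - 1/2) - 2 = 2*(3*x - 3/2) - 1/2 by ring,
      show 3*(2*x - 1/2) = 2*(3*x - 1/2) - 1/2 by ring] at s2
    rw [show 2*(3*x + 1/2) + 3/2 = 2*(3*x + 3/2) - 1/2 by ring,
      show 2*(3*x + 1/2) - 1/2 = 2*(3*x - 1/2) + 3/2 by ring,
      show 2*(3*x - 3/2) + 3/2 = 2*(3*x - 1/2) - 1/2 by ring]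
    linarith
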